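/- For every integer n ≥ 404, y(n) = 2^{2n − 2z(n) − m(n) + 2} − n^{m(n)−1} > 0. -/
import Mathlib

lemma aux_pow (R : ℕ) (hR : 11 ≤ R) : 9 * (R + 1) ^ 2 ≤ 2 ^ R := by
  induction R, hR using Nat.le_induction with
  | base => norm_num
  | succ R hR ih =>
    have h2 : 2 ^ (R + 1) = 2 * 2 ^ R := by ring
    have hRR : 11 * 11 ≤ R * R := Nat.mul_le_mul hR hR
    nlinarith [ih]

lemma key_ineq (n M R : ℕ) (hn : 404 ≤ n) (hM2 : M ^ 2 ≤ 2 * n)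
    (hMu : 2 * n < (M + 1) ^ 2) (hRl : 2 ^ (R - 1) < n) (hR9 : 9 ≤ R) :
    3 * (R + 1) * M ≤ 2 * n + 3 * R + 5 := by
  have h2R : 2 ^ R < 2 * n := by
    have he : 2 ^ R = 2 * 2 ^ (R - 1) := by
      rw [← pow_succ']
      congr 1
      omega
    omega
  have hsq : M ^ 2 = M * M := sq M
  rcases Nat.lt_or_ge R 11 with hR11 | hR11
  · interval_cases R
    · -- R = 9
      rcases Nat.lt_or_ge M 29 with hM | hM
      · omega
      · rcases Nat.lt_or_ge M 30 with hM' | hM'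
        · have hM29 : M = 29 := by omega
          subst hM29
          norm_num at hM2
          omega
        · have : 30 * M ≤ M * M := Nat.mul_le_mul_right M hM'
          omega
    · -- R = 10
      have hM32 : 32 ≤ M := by
        by_contra h
        push_neg at h
        have : (M + 1) ^ 2 ≤ 32 ^ 2 := Nat.pow_le_pow_left (by omega) 2
        norm_num at this
        omega
      rcases Nat.lt_or_ge M 33 with hM' | hM'
      · have hM32 : M = 32 := by omega
        subst hM32
        norm_num at hM2
        omega
      · have : 33 * M ≤ M * M := Nat.mul_le_mul_right M hM'
        omega
  · -- R ≥ 11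
    have hp : 9 * (R + 1) ^ 2 ≤ 2 ^ R := aux_pow R hR11
    have hlt : 3 * (R + 1) < M + 1 := by
      by_contra h
      push_neg at h
      have : (M + 1) ^ 2 ≤ (3 * (R + 1)) ^ 2 := Nat.pow_le_pow_left h 2
      have h9 : (3 * (R + 1)) ^ 2 = 9 * (R + 1) ^ 2 := by ring
      omega
    have : (3 * (R + 1)) * M ≤ M * M := Nat.mul_le_mul_right M (by omega)
    omega

theorem stmt
    (z : ℕ → ℤ) (m r : ℕ → ℕ) (c x : ℕ → ℤ) (y : ℕ → ℚ)
    (hz : ∀ n : ℕ, 1 ≤ n → 3 * z n < 2 * (n : ℤ) ∧ ∀ w : ℤ, 3 * w < 2 * (n : ℤ) → w ≤ z n)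
    (hm : ∀ n : ℕ, 1 ≤ n → (m n : ℤ) ^ 2 ≤ 2 * (n : ℤ) ∧ ∀ w : ℕ, (w : ℤ) ^ 2 ≤ 2 * (n : ℤ) → w ≤ m n)
    (hr : ∀ n : ℕ, 1 ≤ n → n ≤ 2 ^ r n ∧ ∀ s : ℕ, n ≤ 2 ^ s → r n ≤ s)
    (hc : ∀ n : ℕ, c n = 2 * (n : ℤ) - 2 * z n + 2)
    (hx : ∀ n : ℕ, x n = z n - ((r n : ℤ) + 1) * (m n : ℤ))
    (hy : ∀ n : ℕ, y n = (2 : ℚ) ^ (c n - (m n : ℤ)) - (n : ℚ) ^ ((m n : ℤ) - 1)) :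
    ∀ n : ℕ, 404 ≤ n → y n > 0 := by
  intro n hn
  have hn1 : 1 ≤ n := by omega
  obtain ⟨hz1, hz2⟩ := hz n hn1
  obtain ⟨hm1, hm2⟩ := hm n hn1
  obtain ⟨hr1, hr2⟩ := hr n hn1
  have hnZ : (404 : ℤ) ≤ (n : ℤ) := by exact_mod_cast hn
  -- m ≥ 28
  have hm28 : 28 ≤ m n := hm2 28 (by push_cast; nlinarith)
  -- maximality of m : 2n < (m+1)^2
  have hmu : 2 * (n : ℤ) < ((m n : ℤ) + 1) ^ 2 := by
    by_contra h
    push_neg at h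
    have := hm2 (m n + 1) (by push_cast; push_cast at h; linarith)
    omega
  -- nat versions
  have hm2N : (m n) ^ 2 ≤ 2 * n := by exact_mod_cast hm1
  have hmuN : 2 * n < (m n + 1) ^ 2 := by exact_mod_cast hmu
  -- r ≥ 9
  have hr9 : 9 ≤ r n := by
    by_contra h
    push_neg at h
    have : (2 : ℕ) ^ (r n) ≤ 2 ^ 8 := Nat.pow_le_pow_right (by norm_num) (by omega)
    omega
  -- minimality of r : 2^(r-1) < n
  have hrl : 2 ^ (r n - 1) < n := by
    by_contra h
    push_neg at h
    have := hr2 (r n - 1) h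
    omega
  have key := key_ineq n (m n) (r n) hn hm2N hmuN hrl hr9
  have keyZ : 3 * ((r n : ℤ) + 1) * (m n : ℤ) ≤ 2 * (n : ℤ) + 3 * (r n : ℤ) + 5 := by
    exact_mod_cast key
  -- exponent bound
  set K : ℕ := m n - 1 with hK
  have hKZ : ((m n : ℤ) - 1) = (K : ℤ) := by
    have : (K : ℤ) = (m n : ℤ) - 1 := by
      rw [hK]; push_cast [Nat.cast_sub (by omega : 1 ≤ m n)]; ring
    omega
  have hexp : (r n : ℤ) * (K : ℤ) + 1 ≤ c n - (m n : ℤ) := by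
    rw [hc n]
    have h1 : (K : ℤ) = (m n : ℤ) - 1 := by omega
    rw [h1]
    nlinarith [hz1, keyZ]
  have hnn : (0 : ℤ) ≤ (r n : ℤ) * (K : ℤ) := by positivity
  have hpos : (0 : ℤ) ≤ c n - (m n : ℤ) := by linarith
  set E : ℕ := (c n - (m n : ℤ)).toNat with hE
  have hEZ : c n - (m n : ℤ) = (E : ℤ) := (Int.toNat_of_nonneg hpos).symm
  have hEge : r n * K + 1 ≤ E := by
    have : ((r n * K + 1 : ℕ) : ℤ) ≤ (E : ℤ) := by rw [← hEZ]; push_cast; exact hexp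
    exact_mod_cast this
  -- the natural number inequality
  have hnat : n ^ K < 2 ^ E := by
    calc n ^ K ≤ (2 ^ r n) ^ K := Nat.pow_le_pow_left hr1 K
    _ = 2 ^ (r n * K) := by rw [← pow_mul]
    _ < 2 ^ (r n * K + 1) := Nat.pow_lt_pow_right (by norm_num) (by omega)
    _ ≤ 2 ^ E := Nat.pow_le_pow_right (by norm_num) hEge
  rw [hy n, gt_iff_lt, sub_pos, hKZ, hEZ, zpow_natCast, zpow_natCast]
  exact_mod_cast hnat
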